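/- Let α and α' be two finite modification sequences (insertions and deletions of tuples) that, applied to the empty database, yield the same database. Then α' can be obtained from α by a finite sequence of 'innocuous transformations', each of which preserves the resulting database: (1) swapping two adjacent modifications that are not an insert/delete pair of the same fact; (2) removing an adjacent pair ins_R(a)·del_R(a) when a ∉ R at that point; (3) removing a modification that has no effect (inserting a present fact or deleting an absent fact); or the inverses of these. -/

import Mathlib

/-- A database over a relational schema: each relation symbol `R` (of arity
`ar R`) is assigned a relation over the domain `D`. -/
def Database (ρ : Type*) (ar : ρ → ℕ) (D : Type*) :=
  (R : ρ) → Set (Fin (ar R) → D)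

/-- A modification: insertion or deletion of a tuple into/from a relation. -/
inductive Modification (ρ : Type*) (ar : ρ → ℕ) (D : Type*) where
  | ins (R : ρ) (a : Fin (ar R) → D)
  | del (R : ρ) (a : Fin (ar R) → D)

/-- Applying a single modification to a database. -/
def applyMod {ρ : Type*} [DecidableEq ρ] {ar : ρ → ℕ} {D : Type*}
    (δ : Modification ρ ar D) (db : Database ρ ar D) : Database ρ ar D :=
  match δ with
  | .ins R a => Function.update db R (insert a (db R))
  | .del R a => Function.update db R (db R \ {a})

/-- Applying a sequence of modifications (left to right). -/
def applySeq {ρ : Type*} [DecidableEq ρ] {ar : ρ → ℕ} {D : Type*}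
    (α : List (Modification ρ ar D)) (db : Database ρ ar D) : Database ρ ar D :=
  α.foldl (fun d δ => applyMod δ d) db

/-- The empty database. -/
def emptyDb {ρ : Type*} {ar : ρ → ℕ} {D : Type*} : Database ρ ar D :=
  fun _ => ∅

/-- One innocuous transformation of a modification sequence (applied to the
empty database): (1) swapping two adjacent modifications that are not an
insert/delete pair of the same fact of the same relation, (2) removing an
adjacent pair `ins_R(a)·del_R(a)` when `a ∉ R` at that point, (3) removing a
modification with no effect (inserting a present fact or deleting an absent
fact), or (4) the inverse of one of these. -/
inductive InnStep {ρ : Type*} [DecidableEq ρ] {ar : ρ → ℕ} {D : Type*} :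
    List (Modification ρ ar D) → List (Modification ρ ar D) → Prop where
  | swap (pre post : List (Modification ρ ar D)) (δ₁ δ₂ : Modification ρ ar D)
      (h : ¬ ∃ (R : ρ) (a : Fin (ar R) → D),
        (δ₁ = .ins R a ∧ δ₂ = .del R a) ∨ (δ₁ = .del R a ∧ δ₂ = .ins R a)) :
      InnStep (pre ++ δ₁ :: δ₂ :: post) (pre ++ δ₂ :: δ₁ :: post)
  | removePair (pre post : List (Modification ρ ar D)) (R : ρ)
      (a : Fin (ar R) → D) (h : a ∉ applySeq pre emptyDb R) :
      InnStep (pre ++ .ins R a :: .del R a :: post) (pre ++ post)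
  | removeNoopIns (pre post : List (Modification ρ ar D)) (R : ρ)
      (a : Fin (ar R) → D) (h : a ∈ applySeq pre emptyDb R) :
      InnStep (pre ++ .ins R a :: post) (pre ++ post)
  | removeNoopDel (pre post : List (Modification ρ ar D)) (R : ρ)
      (a : Fin (ar R) → D) (h : a ∉ applySeq pre emptyDb R) :
      InnStep (pre ++ .del R a :: post) (pre ++ post)
  | inv {α α' : List (Modification ρ ar D)} : InnStep α α' → InnStep α' α

section InnocuousAux
variable {ρ : Type*} [DecidableEq ρ] {ar : ρ → ℕ} {D : Type*}


lemma applySeq_append (l₁ l₂ : List (Modification ρ ar D)) (db : Database ρ ar D) :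
    applySeq (l₁ ++ l₂) db = applySeq l₂ (applySeq l₁ db) :=
  List.foldl_append ..

lemma db_update_self (db : Database ρ ar D) (R : ρ) (s : Set (Fin (ar R) → D)) :
    Function.update db R s R = s :=
  Function.update_self (β := fun R => Set (Fin (ar R) → D)) R s db

lemma db_update_of_ne {R R' : ρ} (h : R ≠ R') (db : Database ρ ar D)
    (s : Set (Fin (ar R') → D)) : Function.update db R' s R = db R :=
  Function.update_of_ne (β := fun R => Set (Fin (ar R) → D)) h s db

lemma db_update_idem (db : Database ρ ar D) (R : ρ) (s t : Set (Fin (ar R) → D)) :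
    Function.update (Function.update db R s) R t = Function.update db R t :=
  Function.update_idem (β := fun R => Set (Fin (ar R) → D)) s t db

lemma db_update_comm {R R' : ρ} (h : R ≠ R') (s : Set (Fin (ar R) → D))
    (t : Set (Fin (ar R') → D)) (db : Database ρ ar D) :
    Function.update (Function.update db R s) R' t = Function.update (Function.update db R' t) R s :=
  Function.update_comm (β := fun R => Set (Fin (ar R) → D)) h s t db

lemma db_update_eq_self (db : Database ρ ar D) (R : ρ) :
    Function.update db R (db R) = db :=
  Function.update_eq_self (β := fun R => Set (Fin (ar R) → D)) R db

lemma applySeq_cons (δ : Modification ρ ar D) (l : List (Modification ρ ar D))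
    (db : Database ρ ar D) :
    applySeq (δ :: l) db = applySeq l (applyMod δ db) := rfl

lemma applyMod_comm (δ₁ δ₂ : Modification ρ ar D) (db : Database ρ ar D)
    (h : ¬ ∃ (R : ρ) (a : Fin (ar R) → D),
        (δ₁ = .ins R a ∧ δ₂ = .del R a) ∨ (δ₁ = .del R a ∧ δ₂ = .ins R a)) :
    applyMod δ₂ (applyMod δ₁ db) = applyMod δ₁ (applyMod δ₂ db) := by
  obtain ⟨R₁, a₁⟩ | ⟨R₁, a₁⟩ := δ₁ <;> obtain ⟨R₂, a₂⟩ | ⟨R₂, a₂⟩ := δ₂ <;>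
    by_cases hR : R₁ = R₂
  · subst hR
    simp only [applyMod, db_update_idem, db_update_self]
    rw [Set.insert_comm]
  · simp only [applyMod, db_update_of_ne (Ne.symm hR), db_update_of_ne hR,
      db_update_comm hR]
    rfl
  · subst hR
    have ha : a₁ ≠ a₂ := by
      rintro rfl; exact h ⟨R₁, a₁, Or.inl ⟨rfl, rfl⟩⟩
    simp only [applyMod, db_update_idem, db_update_self]
    rw [Set.insert_diff_singleton_comm ha]
  · simp only [applyMod, db_update_of_ne (Ne.symm hR), db_update_of_ne hR,
      db_update_comm hR]
    rfl
  · subst hR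
    have ha : a₁ ≠ a₂ := by
      rintro rfl; exact h ⟨R₁, a₁, Or.inr ⟨rfl, rfl⟩⟩
    simp only [applyMod, db_update_idem, db_update_self]
    rw [Set.insert_diff_singleton_comm (Ne.symm ha)]
  · simp only [applyMod, db_update_of_ne (Ne.symm hR), db_update_of_ne hR,
      db_update_comm hR]
    rfl
  · subst hR
    simp only [applyMod, db_update_idem, db_update_self]
    rw [Set.diff_diff_comm]
  · simp only [applyMod, db_update_of_ne (Ne.symm hR), db_update_of_ne hR,
      db_update_comm hR]
    rfl

lemma step_sound {α α' : List (Modification ρ ar D)} (h : InnStep α α') :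
    applySeq α emptyDb = applySeq α' emptyDb := by
  induction h with
  | swap pre post δ₁ δ₂ h =>
      simp only [applySeq_append, applySeq_cons]
      rw [applyMod_comm δ₁ δ₂ _ h]
  | removePair pre post R a h =>
      simp only [applySeq_append, applySeq_cons]
      congr 1
      simp only [applyMod, db_update_idem, db_update_self]
      rw [Set.insert_diff_self_of_notMem h, db_update_eq_self]
  | removeNoopIns pre post R a h =>
      simp only [applySeq_append, applySeq_cons]
      congr 1
      simp only [applyMod]
      rw [Set.insert_eq_self.2 h, db_update_eq_self]
  | removeNoopDel pre post R a h =>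
      simp only [applySeq_append, applySeq_cons]
      congr 1
      simp only [applyMod]
      rw [Set.diff_singleton_eq_self h, db_update_eq_self]
  | inv _ ih => exact ih.symm

lemma rtg_sound {α α' : List (Modification ρ ar D)}
    (h : Relation.ReflTransGen InnStep α α') :
    applySeq α emptyDb = applySeq α' emptyDb := by
  induction h with
  | refl => rfl
  | tail _ h ih => exact ih.trans (step_sound h)

lemma innStep_symm : Symmetric (@InnStep ρ _ ar D) := fun _ _ h => h.inv

def InsOnly (L : List (Modification ρ ar D)) : Prop :=
  ∀ δ ∈ L, ∃ R a, δ = Modification.ins R a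

lemma insOnly_applySeq (L : List (Modification ρ ar D)) (hins : InsOnly L)
    (db : Database ρ ar D) (R : ρ) :
    applySeq L db R = db R ∪ {a | Modification.ins R a ∈ L} := by
  induction L generalizing db with
  | nil => simp [applySeq]
  | cons δ L' ih =>
      obtain ⟨R', b, rfl⟩ := hins δ (List.mem_cons_self ..)
      have hins' : InsOnly L' := fun δ hδ => hins δ (List.mem_cons_of_mem _ hδ)
      rw [applySeq_cons, ih hins']
      by_cases hR : R = R'
      · subst hR
        have : (applyMod (Modification.ins R b) db) R = insert b (db R) := by
          simp [applyMod, db_update_self]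
        rw [this]
        ext x
        simp only [Set.mem_union, Set.mem_insert_iff, Set.mem_setOf_eq, List.mem_cons,
          Modification.ins.injEq, heq_eq_eq, true_and]
        tauto
      · have : (applyMod (Modification.ins R' b) db) R = db R := by
          simp [applyMod, db_update_of_ne hR]
        rw [this]
        ext x
        simp only [Set.mem_union, Set.mem_setOf_eq, List.mem_cons, Modification.ins.injEq]
        constructor
        · rintro (h | h)
          · exact Or.inl h
          · exact Or.inr (Or.inr h)
        · rintro (h | ⟨⟨rfl, _⟩, _⟩ | h)
          · exact Or.inl h
          · exact absurd rfl hR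
          · exact Or.inr h

lemma step_append {α α' : List (Modification ρ ar D)} (h : InnStep α α')
    (γ : List (Modification ρ ar D)) : InnStep (α ++ γ) (α' ++ γ) := by
  induction h with
  | swap pre post δ₁ δ₂ h =>
      have := InnStep.swap pre (post ++ γ) δ₁ δ₂ h
      simpa using this
  | removePair pre post R a h =>
      have := InnStep.removePair pre (post ++ γ) R a h
      simpa using this
  | removeNoopIns pre post R a h =>
      have := InnStep.removeNoopIns pre (post ++ γ) R a h
      simpa using this
  | removeNoopDel pre post R a h =>
      have := InnStep.removeNoopDel pre (post ++ γ) R a h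
      simpa using this
  | inv _ ih => exact ih.inv

lemma rtg_append {α α' : List (Modification ρ ar D)}
    (h : Relation.ReflTransGen InnStep α α') (γ : List (Modification ρ ar D)) :
    Relation.ReflTransGen InnStep (α ++ γ) (α' ++ γ) := by
  induction h with
  | refl => exact .refl
  | tail _ h ih => exact ih.tail (step_append h γ)

def SwapOK (δ₁ δ₂ : Modification ρ ar D) : Prop :=
  ¬ ∃ (R : ρ) (a : Fin (ar R) → D),
    (δ₁ = .ins R a ∧ δ₂ = .del R a) ∨ (δ₁ = .del R a ∧ δ₂ = .ins R a)

lemma swapOK_ins_ins (R R' : ρ) (a : Fin (ar R) → D) (b : Fin (ar R') → D) :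
    SwapOK (Modification.ins R a) (Modification.ins R' b) := by
  rintro ⟨S, c, ⟨_, h⟩ | ⟨h, _⟩⟩ <;> cases h

lemma moveLeft (δ : Modification ρ ar D) (γ : List (Modification ρ ar D))
    (h : ∀ g ∈ γ, SwapOK g δ) :
    ∀ pre post, Relation.ReflTransGen InnStep
      (pre ++ (γ ++ δ :: post)) (pre ++ (δ :: (γ ++ post))) := by
  induction γ with
  | nil => intro pre post; exact .refl
  | cons g γ' ih =>
      intro pre post
      have h1 := ih (fun x hx => h x (List.mem_cons_of_mem _ hx)) (pre ++ [g]) post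
      have h2 : InnStep (pre ++ g :: δ :: (γ' ++ post)) (pre ++ δ :: g :: (γ' ++ post)) :=
        InnStep.swap pre (γ' ++ post) g δ (h g (List.mem_cons_self ..))
      have e1 : pre ++ [g] ++ (γ' ++ δ :: post) = pre ++ (g :: γ' ++ δ :: post) := by simp
      have e2 : pre ++ [g] ++ (δ :: (γ' ++ post)) = pre ++ g :: δ :: (γ' ++ post) := by simp
      rw [e1, e2] at h1
      exact (h1.tail h2)

lemma perm_connect : ∀ (L' L : List (Modification ρ ar D)), InsOnly L →
    L.Perm L' → ∀ pre, Relation.ReflTransGen InnStep (pre ++ L) (pre ++ L') := by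
  intro L'
  induction L' with
  | nil =>
      intro L _ hp pre
      rw [hp.eq_nil]
  | cons x M' ih =>
      intro L hins hp pre
      have hx : x ∈ L := hp.mem_iff.2 (List.mem_cons_self ..)
      obtain ⟨L₁, L₂, rfl⟩ := List.append_of_mem hx
      obtain ⟨R, a, rfl⟩ := hins x hx
      have hmv := moveLeft (Modification.ins R a) L₁
        (fun g hg => by
          obtain ⟨R', b, rfl⟩ := hins g (List.mem_append_left _ hg)
          exact swapOK_ins_ins R' R b a)
        pre L₂
      have hperm : (L₁ ++ L₂).Perm M' :=
        (List.perm_middle.symm.trans hp).cons_inv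
      have hins' : InsOnly (L₁ ++ L₂) := fun δ hδ => by
        rcases List.mem_append.1 hδ with h | h
        · exact hins δ (List.mem_append_left _ h)
        · exact hins δ (List.mem_append_right _ (List.mem_cons_of_mem _ h))
      have h2 := ih (L₁ ++ L₂) hins' hperm (pre ++ [Modification.ins R a])
      have e1 : pre ++ [Modification.ins R a] ++ (L₁ ++ L₂)
          = pre ++ (Modification.ins R a :: (L₁ ++ L₂)) := by simp
      have e2 : pre ++ [Modification.ins R a] ++ M'
          = pre ++ (Modification.ins R a :: M') := by simp
      rw [e1, e2] at h2
      refine .trans ?_ h2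
      simpa using hmv

lemma reduce (α : List (Modification ρ ar D)) :
    ∃ L, InsOnly L ∧ L.Nodup ∧ Relation.ReflTransGen InnStep α L := by
  induction α using List.reverseRecOn with
  | nil => exact ⟨[], fun δ h => absurd h List.not_mem_nil, List.nodup_nil, .refl⟩
  | append_singleton β δ ih =>
      obtain ⟨L, hins, hnd, hr⟩ := ih
      have hrt : Relation.ReflTransGen InnStep (β ++ [δ]) (L ++ [δ]) := rtg_append hr [δ]
      have hchar : ∀ (M : List (Modification ρ ar D)), InsOnly M → ∀ R,
          applySeq M emptyDb R = {a | Modification.ins R a ∈ M} := by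
        intro M hM R
        rw [insOnly_applySeq M hM emptyDb R]
        show ∅ ∪ _ = _
        rw [Set.empty_union]
      obtain ⟨R, a⟩ | ⟨R, a⟩ := δ
      · by_cases hmem : a ∈ applySeq L emptyDb R
        · refine ⟨L, hins, hnd, hrt.trans ?_⟩
          have hstep := InnStep.removeNoopIns L [] R a hmem
          simpa using Relation.ReflTransGen.single hstep
        · refine ⟨L ++ [Modification.ins R a], ?_, ?_, hrt⟩
          · intro x hx
            rcases List.mem_append.1 hx with h | h
            · exact hins x h
            · exact ⟨R, a, List.mem_singleton.1 h⟩
          · have hnotin : Modification.ins R a ∉ L := by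
              rw [hchar L hins R] at hmem
              exact hmem
            rw [List.nodup_append']
            exact ⟨hnd, List.nodup_singleton _, by
              intro x hx hx'
              rw [List.mem_singleton.1 hx'] at hx
              exact hnotin hx⟩
      · by_cases hmem : a ∈ applySeq L emptyDb R
        · have hmemL : Modification.ins R a ∈ L := by
            rw [hchar L hins R] at hmem
            exact hmem
          obtain ⟨L₁, L₂, rfl⟩ := List.append_of_mem hmemL
          have hnd' := hnd
          rw [List.nodup_append'] at hnd'
          obtain ⟨hnd₁, hndc, hdisj⟩ := hnd'
          rw [List.nodup_cons] at hndc
          obtain ⟨hnotin₂, hnd₂⟩ := hndc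
          have hnotin₁ : Modification.ins R a ∉ L₁ := fun h =>
            hdisj h (List.mem_cons_self ..)
          have hswap : ∀ g ∈ L₂, SwapOK g (Modification.del R a) := by
            intro g hg
            rintro ⟨S, c, ⟨hg1, hg2⟩ | ⟨hg1, hg2⟩⟩
            · injection hg2 with h1 h2
              subst h1
              rw [heq_eq_eq] at h2
              subst h2
              rw [hg1] at hg
              exact hnotin₂ hg
            · cases hg2
          have hmv := moveLeft (Modification.del R a) L₂ hswap
            (L₁ ++ [Modification.ins R a]) []
          have e1 : L₁ ++ [Modification.ins R a] ++ (L₂ ++ [Modification.del R a])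
              = (L₁ ++ Modification.ins R a :: L₂) ++ [Modification.del R a] := by simp
          have e2 : L₁ ++ [Modification.ins R a] ++ (Modification.del R a :: (L₂ ++ []))
              = L₁ ++ Modification.ins R a :: Modification.del R a :: L₂ := by simp
          rw [e1, e2] at hmv
          have hnotm : a ∉ applySeq L₁ emptyDb R := by
            rw [hchar L₁ (fun x hx => hins x (List.mem_append_left _ hx)) R]
            exact hnotin₁
          have hstep := InnStep.removePair L₁ L₂ R a hnotm
          refine ⟨L₁ ++ L₂, ?_, ?_, hrt.trans (hmv.tail hstep)⟩
          · intro x hx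
            rcases List.mem_append.1 hx with h | h
            · exact hins x (List.mem_append_left _ h)
            · exact hins x (List.mem_append_right _ (List.mem_cons_of_mem _ h))
          · rw [List.nodup_append']
            exact ⟨hnd₁, hnd₂, fun x hx hx' => hdisj hx (List.mem_cons_of_mem _ hx')⟩
        · refine ⟨L, hins, hnd, hrt.trans ?_⟩
          have hstep := InnStep.removeNoopDel L [] R a hmem
          simpa using Relation.ReflTransGen.single hstep

theorem innocuous_connects' :
    (∀ α α' : List (Modification ρ ar D), InnStep α α' →
      applySeq α emptyDb = applySeq α' emptyDb) ∧
    (∀ α α' : List (Modification ρ ar D),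
      applySeq α emptyDb = applySeq α' emptyDb →
      Relation.ReflTransGen InnStep α α') := by
  refine ⟨fun α α' h => step_sound h, fun α α' h => ?_⟩
  obtain ⟨L, hins, hnd, hrL⟩ := reduce α
  obtain ⟨L', hins', hnd', hrL'⟩ := reduce α'
  have hdb : applySeq L emptyDb = applySeq L' emptyDb :=
    (rtg_sound hrL).symm.trans (h.trans (rtg_sound hrL'))
  have hchar : ∀ (M : List (Modification ρ ar D)), InsOnly M → ∀ R,
      applySeq M emptyDb R = {a | Modification.ins R a ∈ M} := by
    intro M hM R
    rw [insOnly_applySeq M hM emptyDb R]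
    show ∅ ∪ _ = _
    rw [Set.empty_union]
  have hmem : ∀ δ : Modification ρ ar D, δ ∈ L ↔ δ ∈ L' := by
    intro δ
    obtain ⟨R, a⟩ | ⟨R, a⟩ := δ
    · have := congrFun hdb R
      rw [hchar L hins R, hchar L' hins' R] at this
      constructor
      · intro hx
        have : a ∈ {a | Modification.ins R a ∈ L'} := this ▸ hx
        exact this
      · intro hx
        have : a ∈ {a | Modification.ins R a ∈ L} := this.symm ▸ hx
        exact this
    · constructor
      · intro hx
        obtain ⟨_, _, hh⟩ := hins _ hx
        cases hh
      · intro hx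
        obtain ⟨_, _, hh⟩ := hins' _ hx
        cases hh
  have hperm : L.Perm L' := (List.perm_ext_iff_of_nodup hnd hnd').2 hmem
  have h2 := perm_connect L' L hins hperm []
  simp only [List.nil_append] at h2
  exact hrL.trans (h2.trans ((@Relation.ReflTransGen.symmetric _ _ ⟨fun _ _ h => innStep_symm h⟩).symm _ _ hrL'))


end InnocuousAux

/-- Each innocuous transformation preserves the database obtained from the
empty database, and any two modification sequences yielding the same database
from the empty database are connected by a finite sequence of innocuous
transformations. -/
theorem innocuous_connects {ρ : Type*} [DecidableEq ρ] {ar : ρ → ℕ}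
    {D : Type*} :
    (∀ α α' : List (Modification ρ ar D), InnStep α α' →
      applySeq α emptyDb = applySeq α' emptyDb) ∧
    (∀ α α' : List (Modification ρ ar D),
      applySeq α emptyDb = applySeq α' emptyDb →
      Relation.ReflTransGen InnStep α α') :=
  innocuous_connects'
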